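/- arXiv:1305.2489 — 3 statements merged into one kernel-verified Lean document; each statement's English description precedes it below -/
import Mathlib

section
/- Let λ_0(n,s) = 2^{2s} Γ(n/2) Γ(1+s) / Γ((n-2s)/2) and H(n,s) = 2^{2s} Γ((n+2s)/4)^2 / Γ((n-2s)/4)^2. For n ≥ 10 and every s ∈ (0,1), λ_0(n,s) ≤ H(n,s). -/
open MeasureTheory Real Set

noncomputable def JB (s a : ℝ) : ℝ := ∫ t in Set.Ioc (0:ℝ) 1, t ^ (a-1) * (1-t) ^ (s-1)

lemma ptwise {a s : ℝ} {t : ℝ} (ht : t ∈ Set.Ioc (0:ℝ) 1) :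
    ((t:ℂ) ^ ((a:ℂ)-1) * ((1:ℂ)-(t:ℂ)) ^ ((s:ℂ)-1)) = ((t ^ (a-1) * (1-t) ^ (s-1) : ℝ) : ℂ) := by
  have h1 : ((t:ℂ) ^ ((a:ℂ)-1)) = ((t ^ (a-1) : ℝ) : ℂ) := by
    rw [Complex.ofReal_cpow ht.1.le]; push_cast; ring_nf
  have h2 : (((1:ℂ)-(t:ℂ)) ^ ((s:ℂ)-1)) = (((1-t) ^ (s-1) : ℝ) : ℂ) := by
    rw [show ((1:ℂ)-(t:ℂ)) = ((1-t : ℝ) : ℂ) by push_cast; ring,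
      Complex.ofReal_cpow (by linarith [ht.2] : (0:ℝ) ≤ 1 - t)]
    push_cast; ring_nf
  rw [h1, h2]; push_cast; ring

lemma intJ {s : ℝ} (hs : 0 < s) {a : ℝ} (ha : 0 < a) :
    IntegrableOn (fun t : ℝ => t ^ (a-1) * (1-t) ^ (s-1)) (Set.Ioc (0:ℝ) 1) := by
  have h := Complex.betaIntegral_convergent (u := (a:ℂ)) (v := (s:ℂ)) (by simpa using ha) (by simpa using hs)
  rw [intervalIntegrable_iff_integrableOn_Ioc_of_le zero_le_one] at h
  have hre : IntegrableOn (fun t : ℝ => (((t:ℂ) ^ ((a:ℂ)-1) * ((1:ℂ)-(t:ℂ)) ^ ((s:ℂ)-1))).re) (Set.Ioc (0:ℝ) 1) := h.re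
  refine MeasureTheory.IntegrableOn.congr_fun hre ?_ measurableSet_Ioc
  intro t ht
  simp only [ptwise ht, Complex.ofReal_re]

lemma gamma_J {s : ℝ} (hs : 0 < s) {a : ℝ} (ha : 0 < a) :
    Real.Gamma a * Real.Gamma s = Real.Gamma (a+s) * JB s a := by
  have h := Complex.Gamma_mul_Gamma_eq_betaIntegral (s := (a:ℂ)) (t := (s:ℂ))
    (by simpa using ha) (by simpa using hs)
  have hbeta : Complex.betaIntegral (a:ℂ) (s:ℂ) = ((JB s a : ℝ) : ℂ) := by
    rw [Complex.betaIntegral, intervalIntegral.integral_of_le zero_le_one]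
    rw [MeasureTheory.setIntegral_congr_fun measurableSet_Ioc (fun t ht => ptwise (a := a) (s := s) ht)]
    exact integral_ofReal
  rw [hbeta, Complex.Gamma_ofReal, Complex.Gamma_ofReal, ← Complex.ofReal_add, Complex.Gamma_ofReal] at h
  exact_mod_cast h

lemma JB_pos {s : ℝ} (hs : 0 < s) {a : ℝ} (ha : 0 < a) : 0 < JB s a := by
  have h := gamma_J hs ha
  have h1 : 0 < Real.Gamma a := Real.Gamma_pos_of_pos ha
  have h2 : 0 < Real.Gamma s := Real.Gamma_pos_of_pos hs
  have h3 : 0 < Real.Gamma (a+s) := Real.Gamma_pos_of_pos (by linarith)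
  nlinarith [h, h1, h2, h3]

lemma mul_helper {t : ℝ} (ht0 : 0 < t) (ht1 : t ≤ 1) {α β γ δ : ℝ} (h : γ + δ ≠ 0) :
    (t^α * (1-t)^γ) * (t^β * (1-t)^δ) = t^(α+β) * (1-t)^(γ+δ) := by
  rw [Real.rpow_add ht0, Real.rpow_add' (by linarith) h]; ring

lemma J_sq_le {s : ℝ} (hs : 0 < s) (hs1 : s < 1) {p q : ℝ} (hp : 0 < p) (hq : 0 < q) :
    JB s ((p+q)/2) ^ 2 ≤ JB s p * JB s q := by
  set m : ℝ := (p+q)/2 with hm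
  have hmpos : 0 < m := by rw [hm]; linarith
  set φ : ℝ → ℝ := fun t => t ^ ((p-1)/2) * (1-t) ^ ((s-1)/2) with hφ
  set ψ : ℝ → ℝ := fun t => t ^ ((q-1)/2) * (1-t) ^ ((s-1)/2) with hψ
  have hsne : (s-1)/2 + (s-1)/2 ≠ 0 := by intro h; nlinarith
  have hφφ : ∀ t ∈ Set.Ioc (0:ℝ) 1, t ^ (p-1) * (1-t) ^ (s-1) = φ t * φ t := by
    intro t ht
    rw [hφ, mul_helper ht.1 ht.2 hsne,
      show (p-1)/2 + (p-1)/2 = p-1 by ring, show (s-1)/2 + (s-1)/2 = s-1 by ring]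
  have hψψ : ∀ t ∈ Set.Ioc (0:ℝ) 1, t ^ (q-1) * (1-t) ^ (s-1) = ψ t * ψ t := by
    intro t ht
    rw [hψ, mul_helper ht.1 ht.2 hsne,
      show (q-1)/2 + (q-1)/2 = q-1 by ring, show (s-1)/2 + (s-1)/2 = s-1 by ring]
  have hφψ : ∀ t ∈ Set.Ioc (0:ℝ) 1, t ^ (m-1) * (1-t) ^ (s-1) = φ t * ψ t := by
    intro t ht
    rw [hφ, hψ, mul_helper ht.1 ht.2 hsne,
      show (p-1)/2 + (q-1)/2 = m-1 by rw [hm]; ring, show (s-1)/2 + (s-1)/2 = s-1 by ring]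
  have Iφφ : IntegrableOn (fun u => φ u * φ u) (Set.Ioc (0:ℝ) 1) :=
    (intJ hs hp).congr_fun hφφ measurableSet_Ioc
  have Iψψ : IntegrableOn (fun u => ψ u * ψ u) (Set.Ioc (0:ℝ) 1) :=
    (intJ hs hq).congr_fun hψψ measurableSet_Ioc
  have Iφψ : IntegrableOn (fun u => φ u * ψ u) (Set.Ioc (0:ℝ) 1) :=
    (intJ hs hmpos).congr_fun hφψ measurableSet_Ioc
  have Eφφ : ∫ u in Set.Ioc (0:ℝ) 1, φ u * φ u = JB s p :=
    (MeasureTheory.setIntegral_congr_fun measurableSet_Ioc hφφ).symm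
  have Eψψ : ∫ u in Set.Ioc (0:ℝ) 1, ψ u * ψ u = JB s q :=
    (MeasureTheory.setIntegral_congr_fun measurableSet_Ioc hψψ).symm
  have Eφψ : ∫ u in Set.Ioc (0:ℝ) 1, φ u * ψ u = JB s m :=
    (MeasureTheory.setIntegral_congr_fun measurableSet_Ioc hφψ).symm
  have inner : ∀ t ∈ Set.Ioc (0:ℝ) 1,
      0 ≤ (φ t * φ t) * JB s q - (φ t * ψ t) * (2 * JB s m) + (ψ t * ψ t) * JB s p := by
    intro t ht
    have I1 : IntegrableOn (fun u => (φ t * φ t) * (ψ u * ψ u)) (Set.Ioc (0:ℝ) 1) :=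
      Iψψ.const_mul _
    have I2 : IntegrableOn (fun u => (φ t * ψ t) * (2 * (φ u * ψ u))) (Set.Ioc (0:ℝ) 1) :=
      (Iφψ.const_mul 2).const_mul _
    have I3 : IntegrableOn (fun u => (ψ t * ψ t) * (φ u * φ u)) (Set.Ioc (0:ℝ) 1) :=
      Iφφ.const_mul _
    have h0 : 0 ≤ ∫ u in Set.Ioc (0:ℝ) 1,
        ((φ t * φ t) * (ψ u * ψ u) - (φ t * ψ t) * (2 * (φ u * ψ u)) + (ψ t * ψ t) * (φ u * φ u)) := by
      refine MeasureTheory.setIntegral_nonneg measurableSet_Ioc (fun u _ => ?_)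
      have hexp : (φ t * φ t) * (ψ u * ψ u) - (φ t * ψ t) * (2 * (φ u * ψ u)) + (ψ t * ψ t) * (φ u * φ u)
          = (φ t * ψ u - φ u * ψ t) * (φ t * ψ u - φ u * ψ t) := by ring
      rw [hexp]; exact mul_self_nonneg _
    have I12 : IntegrableOn (fun u => (φ t * φ t) * (ψ u * ψ u) - (φ t * ψ t) * (2 * (φ u * ψ u))) (Set.Ioc (0:ℝ) 1) := I1.sub I2
    rw [MeasureTheory.integral_add I12 I3, MeasureTheory.integral_sub I1 I2,
      MeasureTheory.integral_const_mul, MeasureTheory.integral_const_mul,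
      MeasureTheory.integral_const_mul, MeasureTheory.integral_const_mul,
      Eφφ, Eψψ, Eφψ] at h0
    linarith [h0]
  have I1' : IntegrableOn (fun t => (φ t * φ t) * JB s q) (Set.Ioc (0:ℝ) 1) := Iφφ.mul_const _
  have I2' : IntegrableOn (fun t => (φ t * ψ t) * (2 * JB s m)) (Set.Ioc (0:ℝ) 1) := Iφψ.mul_const _
  have I3' : IntegrableOn (fun t => (ψ t * ψ t) * JB s p) (Set.Ioc (0:ℝ) 1) := Iψψ.mul_const _
  have h1 : 0 ≤ ∫ t in Set.Ioc (0:ℝ) 1,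
      ((φ t * φ t) * JB s q - (φ t * ψ t) * (2 * JB s m) + (ψ t * ψ t) * JB s p) :=
    MeasureTheory.setIntegral_nonneg measurableSet_Ioc inner
  have I12' : IntegrableOn (fun t => (φ t * φ t) * JB s q - (φ t * ψ t) * (2 * JB s m)) (Set.Ioc (0:ℝ) 1) := I1'.sub I2'
  rw [MeasureTheory.integral_add I12' I3', MeasureTheory.integral_sub I1' I2',
    MeasureTheory.integral_mul_const, MeasureTheory.integral_mul_const,
    MeasureTheory.integral_mul_const, Eφφ, Eψψ, Eφψ] at h1
  nlinarith [h1]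

lemma cheb {s : ℝ} (hs : 0 < s) (hs1 : s < 1) {c : ℝ} (hc : 0 ≤ c) :
    JB s (c+2) * JB s 4 ≤ JB s (c+4) * JB s 2 := by
  set F : ℝ → ℝ := fun t => t ^ c with hF
  set G : ℝ → ℝ := fun t => t ^ (2:ℝ) with hG
  set w : ℝ → ℝ := fun t => t ^ ((2:ℝ)-1) * (1-t) ^ (s-1) with hw
  -- pointwise identities on Ioc
  have hFw : ∀ t ∈ Set.Ioc (0:ℝ) 1, t ^ (c+2-1) * (1-t) ^ (s-1) = F t * w t := by
    intro t ht
    rw [hF, hw, show F t * w t = (t ^ c * t ^ ((2:ℝ)-1)) * (1-t) ^ (s-1) by rw [hF, hw]; ring,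
      ← Real.rpow_add ht.1, show c + ((2:ℝ)-1) = c+2-1 by ring]
  have hGw : ∀ t ∈ Set.Ioc (0:ℝ) 1, t ^ ((4:ℝ)-1) * (1-t) ^ (s-1) = G t * w t := by
    intro t ht
    rw [hG, hw, show G t * w t = (t ^ (2:ℝ) * t ^ ((2:ℝ)-1)) * (1-t) ^ (s-1) by rw [hG, hw]; ring,
      ← Real.rpow_add ht.1, show (2:ℝ) + ((2:ℝ)-1) = (4:ℝ)-1 by ring]
  have hFGw : ∀ t ∈ Set.Ioc (0:ℝ) 1, t ^ (c+4-1) * (1-t) ^ (s-1) = F t * G t * w t := by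
    intro t ht
    rw [hF, hG, hw, show F t * G t * w t = (t ^ c * (t ^ (2:ℝ) * t ^ ((2:ℝ)-1))) * (1-t) ^ (s-1)
        by rw [hF, hG, hw]; ring,
      ← Real.rpow_add ht.1, ← Real.rpow_add ht.1, show c + ((2:ℝ) + ((2:ℝ)-1)) = c+4-1 by ring]
  -- integrability and values
  have Iw : IntegrableOn w (Set.Ioc (0:ℝ) 1) := intJ hs (by norm_num : (0:ℝ) < 2)
  have IFw : IntegrableOn (fun u => F u * w u) (Set.Ioc (0:ℝ) 1) :=
    (intJ hs (by linarith : (0:ℝ) < c+2)).congr_fun hFw measurableSet_Ioc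
  have IGw : IntegrableOn (fun u => G u * w u) (Set.Ioc (0:ℝ) 1) :=
    (intJ hs (by norm_num : (0:ℝ) < 4)).congr_fun hGw measurableSet_Ioc
  have IFGw : IntegrableOn (fun u => F u * G u * w u) (Set.Ioc (0:ℝ) 1) :=
    (intJ hs (by linarith : (0:ℝ) < c+4)).congr_fun hFGw measurableSet_Ioc
  have Ew : ∫ u in Set.Ioc (0:ℝ) 1, w u = JB s 2 := rfl
  have EFw : ∫ u in Set.Ioc (0:ℝ) 1, F u * w u = JB s (c+2) :=
    (MeasureTheory.setIntegral_congr_fun measurableSet_Ioc hFw).symm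
  have EGw : ∫ u in Set.Ioc (0:ℝ) 1, G u * w u = JB s 4 :=
    (MeasureTheory.setIntegral_congr_fun measurableSet_Ioc hGw).symm
  have EFGw : ∫ u in Set.Ioc (0:ℝ) 1, F u * G u * w u = JB s (c+4) :=
    (MeasureTheory.setIntegral_congr_fun measurableSet_Ioc hFGw).symm
  have wnn : ∀ t ∈ Set.Ioc (0:ℝ) 1, 0 ≤ w t := by
    intro t ht
    exact mul_nonneg (Real.rpow_nonneg ht.1.le _) (Real.rpow_nonneg (by linarith [ht.2]) _)
  have inner : ∀ t ∈ Set.Ioc (0:ℝ) 1,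
      0 ≤ (F t * G t * w t) * JB s 2 - (F t * w t) * JB s 4 - (G t * w t) * JB s (c+2)
          + w t * JB s (c+4) := by
    intro t ht
    have I1 : IntegrableOn (fun u => (F t * G t * w t) * w u) (Set.Ioc (0:ℝ) 1) := Iw.const_mul _
    have I2 : IntegrableOn (fun u => (F t * w t) * (G u * w u)) (Set.Ioc (0:ℝ) 1) := IGw.const_mul _
    have I3 : IntegrableOn (fun u => (G t * w t) * (F u * w u)) (Set.Ioc (0:ℝ) 1) := IFw.const_mul _
    have I4 : IntegrableOn (fun u => w t * (F u * G u * w u)) (Set.Ioc (0:ℝ) 1) := IFGw.const_mul _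
    have h0 : 0 ≤ ∫ u in Set.Ioc (0:ℝ) 1,
        ((F t * G t * w t) * w u - (F t * w t) * (G u * w u) - (G t * w t) * (F u * w u)
          + w t * (F u * G u * w u)) := by
      refine MeasureTheory.setIntegral_nonneg measurableSet_Ioc (fun u hu => ?_)
      have hexp : (F t * G t * w t) * w u - (F t * w t) * (G u * w u) - (G t * w t) * (F u * w u)
          + w t * (F u * G u * w u) = ((F t - F u) * (G t - G u)) * (w t * w u) := by ring
      rw [hexp]
      have hmono : 0 ≤ (F t - F u) * (G t - G u) := by
        rcases le_total t u with h | h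
        · have h1 : F t ≤ F u := Real.rpow_le_rpow ht.1.le h hc
          have h2 : G t ≤ G u := Real.rpow_le_rpow ht.1.le h (by norm_num)
          nlinarith [h1, h2]
        · have h1 : F u ≤ F t := Real.rpow_le_rpow hu.1.le h hc
          have h2 : G u ≤ G t := Real.rpow_le_rpow hu.1.le h (by norm_num)
          exact mul_nonneg (by linarith) (by linarith)
      exact mul_nonneg hmono (mul_nonneg (wnn t ht) (wnn u hu))
    have I12 : IntegrableOn (fun u => (F t * G t * w t) * w u - (F t * w t) * (G u * w u))
        (Set.Ioc (0:ℝ) 1) := I1.sub I2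
    have I123 : IntegrableOn (fun u => (F t * G t * w t) * w u - (F t * w t) * (G u * w u)
        - (G t * w t) * (F u * w u)) (Set.Ioc (0:ℝ) 1) := I12.sub I3
    rw [MeasureTheory.integral_add I123 I4, MeasureTheory.integral_sub I12 I3,
      MeasureTheory.integral_sub I1 I2, MeasureTheory.integral_const_mul,
      MeasureTheory.integral_const_mul, MeasureTheory.integral_const_mul,
      MeasureTheory.integral_const_mul, Ew, EFw, EGw, EFGw] at h0
    linarith [h0]
  have I1' : IntegrableOn (fun t => (F t * G t * w t) * JB s 2) (Set.Ioc (0:ℝ) 1) := IFGw.mul_const _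
  have I2' : IntegrableOn (fun t => (F t * w t) * JB s 4) (Set.Ioc (0:ℝ) 1) := IFw.mul_const _
  have I3' : IntegrableOn (fun t => (G t * w t) * JB s (c+2)) (Set.Ioc (0:ℝ) 1) := IGw.mul_const _
  have I4' : IntegrableOn (fun t => w t * JB s (c+4)) (Set.Ioc (0:ℝ) 1) := Iw.mul_const _
  have I12' : IntegrableOn (fun t => (F t * G t * w t) * JB s 2 - (F t * w t) * JB s 4)
      (Set.Ioc (0:ℝ) 1) := I1'.sub I2'
  have I123' : IntegrableOn (fun t => (F t * G t * w t) * JB s 2 - (F t * w t) * JB s 4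
      - (G t * w t) * JB s (c+2)) (Set.Ioc (0:ℝ) 1) := I12'.sub I3'
  have h1 : 0 ≤ ∫ t in Set.Ioc (0:ℝ) 1,
      ((F t * G t * w t) * JB s 2 - (F t * w t) * JB s 4 - (G t * w t) * JB s (c+2)
        + w t * JB s (c+4)) :=
    MeasureTheory.setIntegral_nonneg measurableSet_Ioc inner
  rw [MeasureTheory.integral_add I123' I4', MeasureTheory.integral_sub I12' I3',
    MeasureTheory.integral_sub I1' I2', MeasureTheory.integral_mul_const,
    MeasureTheory.integral_mul_const, MeasureTheory.integral_mul_const,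
    MeasureTheory.integral_mul_const, Ew, EFw, EGw, EFGw] at h1
  linarith [h1]

lemma JB_two {s : ℝ} (hs : 0 < s) : JB s 2 = 1/(s*(s+1)) := by
  have h := gamma_J hs (show (0:ℝ) < 2 by norm_num)
  have hG2 : Real.Gamma (2:ℝ) = 1 := Real.Gamma_two
  have hG2s : Real.Gamma ((2:ℝ)+s) = (1+s)*(s*Real.Gamma s) := by
    rw [show (2:ℝ)+s = (1+s)+1 by ring, Real.Gamma_add_one (by positivity),
      show (1:ℝ)+s = s+1 by ring, Real.Gamma_add_one hs.ne']
  rw [hG2, hG2s] at h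
  have hGs : 0 < Real.Gamma s := Real.Gamma_pos_of_pos hs
  field_simp
  nlinarith [h, hGs]

lemma JB_four {s : ℝ} (hs : 0 < s) : JB s 4 = 6/(s*(s+1)*(s+2)*(s+3)) := by
  have h := gamma_J hs (show (0:ℝ) < 4 by norm_num)
  have hG4 : Real.Gamma (4:ℝ) = 6 := by
    rw [show (4:ℝ) = 3+1 by norm_num, Real.Gamma_add_one (by norm_num),
      show (3:ℝ) = 2+1 by norm_num, Real.Gamma_add_one (by norm_num), Real.Gamma_two]
    norm_num
  have hG4s : Real.Gamma ((4:ℝ)+s) = (3+s)*((2+s)*((1+s)*(s*Real.Gamma s))) := by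
    rw [show (4:ℝ)+s = ((3+s))+1 by ring, Real.Gamma_add_one (by positivity),
      show (3:ℝ)+s = ((2+s))+1 by ring, Real.Gamma_add_one (by positivity),
      show (2:ℝ)+s = ((1+s))+1 by ring, Real.Gamma_add_one (by positivity),
      show (1:ℝ)+s = s+1 by ring, Real.Gamma_add_one hs.ne']
  rw [hG4, hG4s] at h
  have hGs : 0 < Real.Gamma s := Real.Gamma_pos_of_pos hs
  field_simp
  nlinarith [h, hGs]

lemma keyJ {s : ℝ} (hs : 0 < s) (hs1 : s < 1) {x : ℝ} (hx : 2 ≤ x) :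
    s * JB s x ^ 2 ≤ JB s (2*x) := by
  have hCS := J_sq_le hs hs1 (p := 2) (q := 2*x-2) (by norm_num) (by linarith)
  rw [show ((2:ℝ)+(2*x-2))/2 = x by ring] at hCS
  have hCh := cheb hs hs1 (c := 2*x-4) (by linarith)
  rw [show (2*x-4)+2 = 2*x-2 by ring, show (2*x-4)+4 = 2*x by ring] at hCh
  have J2 : 0 < JB s 2 := JB_pos hs (by norm_num)
  have J4 : 0 < JB s 4 := JB_pos hs (by norm_num)
  have J2x2 : 0 < JB s (2*x-2) := JB_pos hs (by linarith)
  have J2x : 0 < JB s (2*x) := JB_pos hs (by linarith)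
  have Jx : 0 < JB s x := JB_pos hs (by linarith)
  have hbase : s * JB s 2 ^ 2 ≤ JB s 4 := by
    rw [JB_two hs, JB_four hs]
    have hA : (0:ℝ) < (s*(s+1))^2 := pow_pos (mul_pos hs (by linarith)) 2
    have hB : (0:ℝ) < s*(s+1)*(s+2)*(s+3) :=
      mul_pos (mul_pos (mul_pos hs (by linarith)) (by linarith)) (by linarith)
    rw [show s * (1/(s*(s+1)))^2 = s/((s*(s+1))^2) by field_simp, div_le_div_iff₀ hA hB]
    have hint : 0 ≤ s*s*s*(s+1)*(1-s) :=
      mul_nonneg (mul_nonneg (mul_nonneg (mul_nonneg hs.le hs.le) hs.le) (by linarith)) (by linarith)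
    nlinarith [hint]
  have h1 : s * JB s x^2 * JB s 4 ≤ s * (JB s 2 * JB s (2*x-2)) * JB s 4 :=
    mul_le_mul_of_nonneg_right (mul_le_mul_of_nonneg_left hCS hs.le) J4.le
  have h2 : s * (JB s 2 * JB s (2*x-2)) * JB s 4 ≤ s * JB s 2^2 * JB s (2*x) := by
    nlinarith [mul_le_mul_of_nonneg_left hCh (le_of_lt (mul_pos hs J2))]
  have h3 : s * JB s 2^2 * JB s (2*x) ≤ JB s 4 * JB s (2*x) := by
    nlinarith [mul_le_mul_of_nonneg_right hbase (le_of_lt J2x)]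
  nlinarith [h1, h2, h3, J4, Jx, J2x, mul_pos J4 J2x]

theorem singular_solution_semistable_high_dim
    (n : ℕ) (hn : 10 ≤ n) (s : ℝ) (hs : 0 < s) (hs1 : s < 1) :
    2 ^ (2 * s) * Real.Gamma ((n : ℝ) / 2) * Real.Gamma (1 + s) / Real.Gamma (((n : ℝ) - 2 * s) / 2)
      ≤ 2 ^ (2 * s) * Real.Gamma (((n : ℝ) + 2 * s) / 4) ^ 2 / Real.Gamma (((n : ℝ) - 2 * s) / 4) ^ 2 := by
  have hn' : (10:ℝ) ≤ (n:ℝ) := by exact_mod_cast hn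
  set x : ℝ := ((n:ℝ) - 2*s)/4 with hxdef
  have hx2 : 2 ≤ x := by rw [hxdef]; linarith
  have e1 : (n:ℝ)/2 = 2*x+s := by rw [hxdef]; ring
  have e2 : ((n:ℝ)-2*s)/2 = 2*x := by rw [hxdef]; ring
  have e3 : ((n:ℝ)+2*s)/4 = x+s := by rw [hxdef]; ring
  rw [e1, e2, e3]
  have hxpos : (0:ℝ) < x := by linarith
  have h2xpos : (0:ℝ) < 2*x := by linarith
  have Jx : 0 < JB s x := JB_pos hs hxpos
  have J2x : 0 < JB s (2*x) := JB_pos hs h2xpos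
  have gx := gamma_J hs hxpos
  have g2x := gamma_J hs h2xpos
  have hGx : 0 < Real.Gamma x := Real.Gamma_pos_of_pos hxpos
  have hG2x : 0 < Real.Gamma (2*x) := Real.Gamma_pos_of_pos h2xpos
  have hGs : 0 < Real.Gamma s := Real.Gamma_pos_of_pos hs
  have hGxs : Real.Gamma (x+s) = Real.Gamma x * Real.Gamma s / JB s x := by
    rw [eq_div_iff Jx.ne']; linarith [gx]
  have hG2xs : Real.Gamma (2*x+s) = Real.Gamma (2*x) * Real.Gamma s / JB s (2*x) := by
    rw [eq_div_iff J2x.ne']; linarith [g2x]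
  have hG1s : Real.Gamma (1+s) = s * Real.Gamma s := by
    rw [add_comm, Real.Gamma_add_one hs.ne']
  have h2pow : (0:ℝ) < 2 ^ (2*s) := Real.rpow_pos_of_pos (by norm_num) _
  have main1 : 2 ^ (2*s) * Real.Gamma (2*x+s) * Real.Gamma (1+s) / Real.Gamma (2*x)
      = (2 ^ (2*s) * Real.Gamma s ^ 2 * s) / JB s (2*x) := by
    rw [hG2xs, hG1s]; field_simp
  have main2 : 2 ^ (2*s) * Real.Gamma (x+s) ^ 2 / Real.Gamma x ^ 2
      = (2 ^ (2*s) * Real.Gamma s ^ 2) / JB s x ^ 2 := by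
    rw [hGxs]; field_simp
  rw [main1, main2, div_le_div_iff₀ J2x (by positivity)]
  have hkey := keyJ hs hs1 hx2
  nlinarith [mul_le_mul_of_nonneg_left hkey (le_of_lt (mul_pos h2pow (mul_pos hGs hGs)))]
end

section
/- Let s ∈ (0,1), n ≥ 1, and u_0(x) = (1 − |x|^2)_+^s on ℝ^n. Then for p sufficiently large, u_0 does not belong to the fractional Sobolev space W^{2s,p}(B_1) when 2s ≠ 1; in particular, for s = 1/2, u_0(x) = (1−|x|^2)_+^{1/2} satisfies ∫_{B_1} |∇u_0|^p dx = ∞ for every p ≥ 2. -/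
open MeasureTheory Set Metric
open scoped ENNReal

/-- The integral of `K/(1-r)` over `(1/2, 1)` diverges. -/
lemma aux_one_dim (K : ℝ) (hK : 0 < K) :
    ∫⁻ r in Set.Ioo (1/2 : ℝ) 1, ENNReal.ofReal (K * (1 - r)⁻¹) = ⊤ := by
  by_contra h
  have hmeas : AEStronglyMeasurable (fun r : ℝ => K * (1 - r)⁻¹)
      (volume.restrict (Set.Ioo (1/2 : ℝ) 1)) := by
    apply Measurable.aestronglyMeasurable
    fun_prop
  have hpos : 0 ≤ᵐ[volume.restrict (Set.Ioo (1/2 : ℝ) 1)] fun r => K * (1 - r)⁻¹ := by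
    filter_upwards [ae_restrict_mem measurableSet_Ioo] with r hr
    have h1 : (0:ℝ) < 1 - r := by linarith [hr.2]
    positivity
  have hint : Integrable (fun r : ℝ => K * (1 - r)⁻¹)
      (volume.restrict (Set.Ioo (1/2 : ℝ) 1)) :=
    (lintegral_ofReal_ne_top_iff_integrable hmeas hpos).mp h
  have hint2 : IntegrableOn (fun r : ℝ => (r - 1)⁻¹) (Set.Ioo (1/2 : ℝ) 1) := by
    have h2 := (hint.const_mul K⁻¹).neg
    apply h2.congr
    filter_upwards [ae_restrict_mem measurableSet_Ioo] with r hr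
    have : (1:ℝ) - r ≠ 0 := by have := hr.2; intro h; apply absurd h; linarith
    simp only [Pi.neg_apply]
    rw [← mul_assoc, inv_mul_cancel₀ hK.ne', one_mul, ← inv_neg, neg_sub]
  have hint3 : IntervalIntegrable (fun r : ℝ => (r - 1)⁻¹) volume (1/2) 1 := by
    rw [intervalIntegrable_iff_integrableOn_Ioo_of_le (by norm_num)]
    exact hint2
  rw [intervalIntegrable_sub_inv_iff] at hint3
  rcases hint3 with h' | h'
  · norm_num at h'
  · exact h' (Set.right_mem_uIcc)

/-- Polar-coordinates formula for the lower Lebesgue integral of a function of the norm. -/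
lemma lintegral_norm_polar (n : ℕ) (hn : 1 ≤ n) (g : ℝ → ℝ≥0∞) (hg : Measurable g) :
    ∫⁻ x : EuclideanSpace ℝ (Fin n), g ‖x‖ =
      (volume : Measure (EuclideanSpace ℝ (Fin n))).toSphere Set.univ *
        ∫⁻ r in Set.Ioi (0 : ℝ), ENNReal.ofReal (r ^ (n - 1)) * g r := by
  haveI : Nonempty (Fin n) := Fin.pos_iff_nonempty.mp hn
  haveI : Nontrivial (EuclideanSpace ℝ (Fin n)) := inferInstance
  set E := EuclideanSpace ℝ (Fin n) with hE
  have hdim : Module.finrank ℝ E = n := finrank_euclideanSpace_fin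
  calc
    ∫⁻ x : E, g ‖x‖
        = ∫⁻ x in ({0}ᶜ : Set E), g ‖x‖ := by
          rw [restrict_compl_singleton]
    _ = ∫⁻ x : ({0}ᶜ : Set E), g ‖(x : E)‖ ∂((volume : Measure E).comap Subtype.val) :=
          (lintegral_subtype_comap (measurableSet_singleton 0).compl _).symm
    _ = ∫⁻ x : ({0}ᶜ : Set E),
          (fun y : sphere (0:E) 1 × Set.Ioi (0:ℝ) => g y.2) (homeomorphUnitSphereProd E x)
            ∂((volume : Measure E).comap Subtype.val) := by
          exact lintegral_congr fun x => by simp only [homeomorphUnitSphereProd_apply_snd_coe]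
    _ = ∫⁻ y : sphere (0:E) 1 × Set.Ioi (0:ℝ), g y.2
            ∂((volume : Measure E).toSphere.prod
              (Measure.volumeIoiPow (Module.finrank ℝ E - 1))) :=
          (Measure.measurePreserving_homeomorphUnitSphereProd (volume : Measure E)).lintegral_comp
            (hg.comp (measurable_subtype_coe.comp measurable_snd))
    _ = ∫⁻ _ : sphere (0:E) 1, (∫⁻ r : Set.Ioi (0:ℝ), g r ∂(Measure.volumeIoiPow (n - 1)))
            ∂(volume : Measure E).toSphere := by
          rw [hdim]
          exact lintegral_prod _ ((hg.comp (measurable_subtype_coe.comp measurable_snd)).aemeasurable)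
    _ = (volume : Measure E).toSphere Set.univ *
          ∫⁻ r : Set.Ioi (0:ℝ), g r ∂(Measure.volumeIoiPow (n - 1)) := by
          rw [lintegral_const, mul_comm]
    _ = (volume : Measure E).toSphere Set.univ *
          ∫⁻ r in Set.Ioi (0 : ℝ), ENNReal.ofReal (r ^ (n - 1)) * g r := by
          congr 1
          rw [Measure.volumeIoiPow]
          erw [lintegral_withDensity_eq_lintegral_mul _
              ((measurable_subtype_coe.pow_const _).ennreal_ofReal)
              (hg.comp measurable_subtype_coe :
                Measurable fun r : Set.Ioi (0:ℝ) => g r)]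
          erw [← lintegral_subtype_comap measurableSet_Ioi
            (fun r : ℝ => ENNReal.ofReal (r ^ (n - 1)) * g r)]
          rfl

theorem grad_u0_not_Lp
    (n : ℕ) (hn : 1 ≤ n) (p : ℝ) (hp : 2 ≤ p) :
    ∫⁻ x in Metric.ball (0 : EuclideanSpace ℝ (Fin n)) 1,
        ENNReal.ofReal ((‖x‖ / Real.sqrt (1 - ‖x‖ ^ 2)) ^ p) = ⊤ := by
  haveI : Nonempty (Fin n) := Fin.pos_iff_nonempty.mp hn
  haveI : Nontrivial (EuclideanSpace ℝ (Fin n)) := inferInstance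
  have hp0 : p ≠ 0 := by positivity
  set g : ℝ → ℝ≥0∞ := fun r => ENNReal.ofReal ((r / Real.sqrt (1 - r ^ 2)) ^ p) with hgdef
  have hg : Measurable g := by
    rw [hgdef]; fun_prop
  -- the constant in the lower bound
  set c : ℝ := 1 / (2 * Real.sqrt 2) with hc
  have hc0 : 0 < c := by
    rw [hc]; positivity
  set K : ℝ := (1/2 : ℝ) ^ (n - 1) * c ^ p with hKdef
  have hK : 0 < K := by
    rw [hKdef]
    positivity
  -- pointwise lower bound on (1/2, 1)
  have key : ∀ r ∈ Set.Ioo (1/2 : ℝ) 1,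
      ENNReal.ofReal (K * (1 - r)⁻¹) ≤ ENNReal.ofReal (r ^ (n - 1)) * g r := by
    intro r hr
    have hr1 : (1/2 : ℝ) < r := hr.1
    have hr2 : r < 1 := hr.2
    have hu0 : (0:ℝ) < 1 - r := by linarith
    have hu1 : (1:ℝ) - r ≤ 1 := by linarith
    have hrpos : (0:ℝ) < r := by linarith
    have hsq_pos : (0:ℝ) < 1 - r ^ 2 := by nlinarith
    have hsqrt_pos : 0 < Real.sqrt (1 - r ^ 2) := Real.sqrt_pos.mpr hsq_pos
    -- √(1-r²) ≤ √2 √(1-r)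
    have h1 : Real.sqrt (1 - r ^ 2) ≤ Real.sqrt 2 * Real.sqrt (1 - r) := by
      rw [← Real.sqrt_mul (by norm_num : (0:ℝ) ≤ 2)]
      apply Real.sqrt_le_sqrt
      nlinarith
    have hsu : 0 < Real.sqrt (1 - r) := Real.sqrt_pos.mpr hu0
    -- t ≥ c / √(1-r)
    have h2 : c / Real.sqrt (1 - r) ≤ r / Real.sqrt (1 - r ^ 2) := by
      rw [div_le_div_iff₀ (by positivity) hsqrt_pos]
      calc c * Real.sqrt (1 - r ^ 2) ≤ c * (Real.sqrt 2 * Real.sqrt (1 - r)) := by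
            apply mul_le_mul_of_nonneg_left h1 hc0.le
        _ = (1/2) * Real.sqrt (1 - r) := by
            rw [hc]
            have h2ne : Real.sqrt 2 ≠ 0 := by positivity
            field_simp
        _ ≤ r * Real.sqrt (1 - r) := by
            apply mul_le_mul_of_nonneg_right hr1.le hsu.le
    -- rpow bound
    have h3 : (c / Real.sqrt (1 - r)) ^ p ≤ (r / Real.sqrt (1 - r ^ 2)) ^ p :=
      Real.rpow_le_rpow (by positivity) h2 (by linarith)
    have h4 : (c / Real.sqrt (1 - r)) ^ p = c ^ p * ((Real.sqrt (1 - r)) ^ p)⁻¹ := by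
      rw [div_eq_mul_inv, Real.mul_rpow hc0.le (by positivity), Real.inv_rpow hsu.le]
    have h5 : (Real.sqrt (1 - r)) ^ p ≤ 1 - r := by
      rw [Real.sqrt_eq_rpow, ← Real.rpow_mul hu0.le]
      calc (1 - r) ^ (1/2 * p) ≤ (1 - r) ^ (1:ℝ) :=
            Real.rpow_le_rpow_of_exponent_ge hu0 hu1 (by linarith)
        _ = 1 - r := Real.rpow_one _
    have h6 : (1 - r)⁻¹ ≤ ((Real.sqrt (1 - r)) ^ p)⁻¹ := by
      apply inv_anti₀ (by positivity) h5
    have h7 : K * (1 - r)⁻¹ ≤ r ^ (n - 1) * ((r / Real.sqrt (1 - r ^ 2)) ^ p) := by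
      rw [hKdef, mul_assoc]
      apply mul_le_mul
      · apply pow_le_pow_left₀ (by norm_num) hr1.le
      · calc c ^ p * (1 - r)⁻¹ ≤ c ^ p * ((Real.sqrt (1 - r)) ^ p)⁻¹ := by
              apply mul_le_mul_of_nonneg_left h6 (by positivity)
          _ = (c / Real.sqrt (1 - r)) ^ p := h4.symm
          _ ≤ _ := h3
      · positivity
      · positivity
    calc ENNReal.ofReal (K * (1 - r)⁻¹)
        ≤ ENNReal.ofReal (r ^ (n - 1) * ((r / Real.sqrt (1 - r ^ 2)) ^ p)) :=
          ENNReal.ofReal_le_ofReal h7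
      _ = ENNReal.ofReal (r ^ (n - 1)) * g r := by
          rw [ENNReal.ofReal_mul (by positivity)]
  -- the 1-dimensional integral diverges
  have hI : ∫⁻ r in Set.Ioi (0 : ℝ), ENNReal.ofReal (r ^ (n - 1)) * g r = ⊤ := by
    rw [eq_top_iff]
    calc (⊤ : ℝ≥0∞) = ∫⁻ r in Set.Ioo (1/2 : ℝ) 1, ENNReal.ofReal (K * (1 - r)⁻¹) :=
          (aux_one_dim K hK).symm
      _ ≤ ∫⁻ r in Set.Ioo (1/2 : ℝ) 1, ENNReal.ofReal (r ^ (n - 1)) * g r :=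
          setLIntegral_mono' measurableSet_Ioo key
      _ ≤ _ := lintegral_mono_set (fun r hr => by exact lt_trans (by norm_num) hr.1)
  -- the integrand vanishes outside the ball
  have hsupp : Function.support (fun x : EuclideanSpace ℝ (Fin n) => g ‖x‖)
      ⊆ Metric.ball (0 : EuclideanSpace ℝ (Fin n)) 1 := by
    intro x hx
    simp only [Function.mem_support] at hx
    by_contra hb
    apply hx
    have h1 : (1:ℝ) ≤ ‖x‖ := by
      simpa [Metric.mem_ball, dist_zero_right, not_lt] using hb
    have h0 : Real.sqrt (1 - ‖x‖ ^ 2) = 0 :=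
      Real.sqrt_eq_zero_of_nonpos (by nlinarith)
    simp [hgdef, h0, Real.zero_rpow hp0]
  have hne : (volume : Measure (EuclideanSpace ℝ (Fin n))).toSphere Set.univ ≠ 0 := by
    rw [Measure.toSphere_apply_univ]
    apply mul_ne_zero
    · rw [finrank_euclideanSpace_fin]
      exact_mod_cast Nat.cast_ne_zero.mpr (by omega : n ≠ 0)
    · exact (measure_ball_pos volume 0 one_pos).ne'
  calc ∫⁻ x in Metric.ball (0 : EuclideanSpace ℝ (Fin n)) 1,
        ENNReal.ofReal ((‖x‖ / Real.sqrt (1 - ‖x‖ ^ 2)) ^ p)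
      = ∫⁻ x : EuclideanSpace ℝ (Fin n), g ‖x‖ :=
        setLIntegral_eq_of_support_subset hsupp
    _ = (volume : Measure (EuclideanSpace ℝ (Fin n))).toSphere Set.univ *
          ∫⁻ r in Set.Ioi (0 : ℝ), ENNReal.ofReal (r ^ (n - 1)) * g r :=
        lintegral_norm_polar n hn g hg
    _ = ⊤ := by rw [hI, ENNReal.mul_top hne]
end

section
/- Let f : [0,∞) → ℝ be C^2 and positive with f' > 0 on [0,∞), and suppose τ := lim_{t→∞} f(t)f''(t)/f'(t)^2 exists and τ < 1. Then for every ε ∈ (0, 1−τ) there exists a constant C > 0, depending only on f, τ, and ε, such that f(t) ≤ C(1+t)^{1/(1−(τ+ε))} for all t > 0. -/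
open Set Filter

theorem power_growth_of_tau_lt_one
    (f f' f'' : ℝ → ℝ) (τ : ℝ)
    (hfpos : ∀ t ∈ Ici (0 : ℝ), 0 < f t)
    (hf'pos : ∀ t ∈ Ici (0 : ℝ), 0 < f' t)
    (hf : ∀ t ∈ Ici (0 : ℝ), HasDerivAt f (f' t) t)
    (hf' : ∀ t ∈ Ici (0 : ℝ), HasDerivAt f' (f'' t) t)
    (hf''cont : ContinuousOn f'' (Ici 0))
    (hτ : Tendsto (fun t => f t * f'' t / (f' t) ^ 2) atTop (nhds τ))
    (hτ1 : τ < 1)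
    (ε : ℝ) (hε : 0 < ε) (hε1 : ε < 1 - τ) :
    ∃ C : ℝ, 0 < C ∧ ∀ t : ℝ, 0 < t → f t ≤ C * (1 + t) ^ (1 / (1 - (τ + ε))) := by
  set δ : ℝ := 1 - (τ + ε) with hδdef
  have hδ : 0 < δ := by simp only [hδdef]; linarith
  -- eventually the ratio is below τ + ε
  have hev : ∀ᶠ t in atTop, f t * f'' t / (f' t) ^ 2 < τ + ε :=
    hτ.eventually_lt_const (by linarith)
  obtain ⟨t₀, ht₀⟩ := eventually_atTop.mp hev
  set t₁ : ℝ := max t₀ 0 with ht₁def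
  have ht₁0 : (0 : ℝ) ≤ t₁ := le_max_right _ _
  have hmem : ∀ t : ℝ, t₁ ≤ t → t ∈ Ici (0 : ℝ) := fun t ht => le_trans ht₁0 ht
  have hratio : ∀ t : ℝ, t₁ ≤ t → f t * f'' t / (f' t) ^ 2 < τ + ε :=
    fun t ht => ht₀ t (le_trans (le_max_left _ _) ht)
  set g : ℝ → ℝ := fun t => f t / f' t with hgdef
  have hgpos : ∀ t ∈ Ici (0 : ℝ), 0 < g t :=
    fun t ht => div_pos (hfpos t ht) (hf'pos t ht)
  have hg : ∀ t ∈ Ici (0 : ℝ), HasDerivAt g (1 - f t * f'' t / (f' t) ^ 2) t := by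
    intro t ht
    have h := (hf t ht).div (hf' t ht) (hf'pos t ht).ne'
    refine h.congr_deriv ?_
    have := (hf'pos t ht).ne'
    field_simp
  -- growth of g
  have hgrow : ∀ t : ℝ, t₁ ≤ t → g t₁ + δ * (t - t₁) ≤ g t := by
    have hmono : MonotoneOn (fun t => g t - δ * t) (Ici t₁) := by
      apply monotoneOn_of_hasDerivWithinAt_nonneg (convex_Ici t₁)
        (f' := fun t => 1 - f t * f'' t / (f' t) ^ 2 - δ)
      · intro t ht
        exact (((hg t (hmem t ht)).sub ((hasDerivAt_id t).const_mul δ)).continuousAt).continuousWithinAt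
      · intro t ht
        rw [interior_Ici] at ht
        have h := ((hg t (hmem t ht.le)).sub ((hasDerivAt_id t).const_mul δ)).hasDerivWithinAt
          (s := interior (Ici t₁))
        simp at h
        rw [interior_Ici]
        exact h
      · intro t ht
        rw [interior_Ici] at ht
        have := hratio t ht.le
        linarith
    intro t ht
    have h2 := hmono (self_mem_Ici) (mem_Ici.mpr ht) ht
    simp only at h2
    linarith
  have hgt₁pos : 0 < g t₁ := hgpos t₁ (mem_Ici.mpr ht₁0)
  set L : ℝ → ℝ := fun t => g t₁ + δ * (t - t₁) with hLdef
  have hLpos : ∀ t : ℝ, t₁ ≤ t → 0 < L t := by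
    intro t ht
    have : 0 ≤ δ * (t - t₁) := mul_nonneg hδ.le (by linarith)
    simp only [hLdef]; linarith
  have hLderiv : ∀ t : ℝ, HasDerivAt L δ t := by
    intro t
    have : HasDerivAt (fun t : ℝ => g t₁ + δ * (t - t₁)) (δ * 1) t :=
      (((hasDerivAt_id t).sub_const t₁).const_mul δ).const_add (g t₁)
    simpa only [mul_one] using this
  -- ψ is antitone
  set ψ : ℝ → ℝ := fun t => Real.log (f t) - (1 / δ) * Real.log (L t) with hψdef
  have hψderiv : ∀ t : ℝ, t₁ ≤ t →
      HasDerivAt ψ (f' t / f t - 1 / L t) t := by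
    intro t ht
    have h1 : HasDerivAt (fun t => Real.log (f t)) (f' t / f t) t :=
      (hf t (hmem t ht)).log (hfpos t (hmem t ht)).ne'
    have h2 : HasDerivAt (fun t => Real.log (L t)) (δ / L t) t :=
      (hLderiv t).log (hLpos t ht).ne'
    have := h1.sub (h2.const_mul (1 / δ))
    refine this.congr_deriv ?_
    field_simp
  have hanti : AntitoneOn ψ (Ici t₁) := by
    apply antitoneOn_of_hasDerivWithinAt_nonpos (convex_Ici t₁)
      (f' := fun t => f' t / f t - 1 / L t)
    · intro t ht
      exact (hψderiv t ht).continuousAt.continuousWithinAt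
    · intro t ht
      rw [interior_Ici] at ht
      exact (hψderiv t ht.le).hasDerivWithinAt
    · intro t ht
      rw [interior_Ici] at ht
      have hL : L t ≤ g t := hgrow t ht.le
      have hLp := hLpos t ht.le
      have hfp := hfpos t (hmem t ht.le)
      have hf'p := hf'pos t (hmem t ht.le)
      have hmul : f' t * L t ≤ f t := by
        have := (le_div_iff₀ hf'p).mp (hL.trans_eq rfl)
        linarith [this]
      have : f' t / f t ≤ 1 / L t := by
        rw [div_le_div_iff₀ hfp hLp]
        linarith
      linarith
  -- exponentiate
  have key : ∀ t : ℝ, t₁ ≤ t → f t ≤ f t₁ * (L t / g t₁) ^ (1 / δ) := by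
    intro t ht
    have hψle : ψ t ≤ ψ t₁ := hanti self_mem_Ici (mem_Ici.mpr ht) ht
    have hLt₁ : L t₁ = g t₁ := by simp [hLdef]
    have hLp := hLpos t ht
    have hdivp : 0 < L t / g t₁ := div_pos hLp hgt₁pos
    have hRpos : 0 < f t₁ * (L t / g t₁) ^ (1 / δ) :=
      mul_pos (hfpos t₁ (mem_Ici.mpr ht₁0)) (Real.rpow_pos_of_pos hdivp _)
    rw [← Real.log_le_log_iff (hfpos t (hmem t ht)) hRpos]
    rw [Real.log_mul (hfpos t₁ (mem_Ici.mpr ht₁0)).ne' (Real.rpow_pos_of_pos hdivp _).ne',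
      Real.log_rpow hdivp, Real.log_div hLp.ne' hgt₁pos.ne']
    simp only [hψdef, hLt₁] at hψle
    have : 0 < 1 / δ := by positivity
    nlinarith [hψle]
  -- bound L t / g t₁ by B * (1 + t)
  set B : ℝ := (g t₁ + δ) / g t₁ with hBdef
  have hBpos : 0 < B := div_pos (by linarith) hgt₁pos
  have hLB : ∀ t : ℝ, t₁ ≤ t → L t / g t₁ ≤ B * (1 + t) := by
    intro t ht
    have ht0 : (0 : ℝ) ≤ t := le_trans ht₁0 ht
    have h1 : L t ≤ (g t₁ + δ) * (1 + t) := by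
      simp only [hLdef]
      nlinarith [mul_nonneg hδ.le ht₁0, mul_nonneg hgt₁pos.le ht0]
    rw [div_le_iff₀ hgt₁pos, hBdef]
    calc L t ≤ (g t₁ + δ) * (1 + t) := h1
      _ = (g t₁ + δ) / g t₁ * (1 + t) * g t₁ := by field_simp
  set C₁ : ℝ := f t₁ * B ^ (1 / δ) with hC₁def
  have hC₁pos : 0 < C₁ := mul_pos (hfpos t₁ (mem_Ici.mpr ht₁0)) (Real.rpow_pos_of_pos hBpos _)
  have hbig : ∀ t : ℝ, t₁ ≤ t → f t ≤ C₁ * (1 + t) ^ (1 / δ) := by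
    intro t ht
    have ht0 : (0 : ℝ) ≤ t := le_trans ht₁0 ht
    have h1 := key t ht
    have h2 : (L t / g t₁) ^ (1 / δ) ≤ (B * (1 + t)) ^ (1 / δ) :=
      Real.rpow_le_rpow (div_pos (hLpos t ht) hgt₁pos).le (hLB t ht) (by positivity)
    have h3 : (B * (1 + t)) ^ (1 / δ) = B ^ (1 / δ) * (1 + t) ^ (1 / δ) :=
      Real.mul_rpow hBpos.le (by linarith)
    calc f t ≤ f t₁ * (L t / g t₁) ^ (1 / δ) := h1
      _ ≤ f t₁ * (B * (1 + t)) ^ (1 / δ) := by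
          exact mul_le_mul_of_nonneg_left h2 (hfpos t₁ (mem_Ici.mpr ht₁0)).le
      _ = C₁ * (1 + t) ^ (1 / δ) := by rw [h3, hC₁def]; ring
  -- bound on the compact part
  have hcont : ContinuousOn f (Icc 0 t₁) := by
    intro t ht
    exact (hf t ht.1).continuousAt.continuousWithinAt
  obtain ⟨xm, hxm, hmax⟩ := (isCompact_Icc (a := (0:ℝ)) (b := t₁)).exists_isMaxOn
    (nonempty_Icc.mpr ht₁0) hcont
  set M : ℝ := f xm with hMdef
  have hMpos : 0 < M := hfpos xm hxm.1
  refine ⟨C₁ + M, by positivity, ?_⟩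
  intro t htpos
  have hone : (1 : ℝ) ≤ (1 + t) ^ (1 / δ) :=
    Real.one_le_rpow (by linarith) (by positivity)
  have hrnn : (0 : ℝ) ≤ (1 + t) ^ (1 / δ) := by linarith
  rcases le_or_gt t₁ t with ht | ht
  · have := hbig t ht
    nlinarith [mul_le_mul_of_nonneg_right hMpos.le hrnn]
  · have htI : t ∈ Icc (0 : ℝ) t₁ := ⟨htpos.le, ht.le⟩
    have hft : f t ≤ M := hmax htI
    have h1 : M ≤ M * (1 + t) ^ (1 / δ) := le_mul_of_one_le_right hMpos.le hone
    nlinarith [mul_nonneg hC₁pos.le hrnn]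
end
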